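/- The function g : (0,∞) → ℝ defined by g(x) = m(√x)/√x, where m is the Mills ratio of the standard normal law, is strictly reciprocally concave on (0,∞): g is strictly convex on (0,∞) and x ↦ g(1/x) is strictly concave on (0,∞). -/

import Mathlib

/-- The standard normal probability density function. -/
noncomputable def stdNormalPDF (t : ℝ) : ℝ := Real.exp (-t ^ 2 / 2) / Real.sqrt (2 * Real.pi)

/-- The Mills ratio of the standard normal distribution: survival function over density. -/
noncomputable def millsRatio (x : ℝ) : ℝ := (∫ t in Set.Ioi x, stdNormalPDF t) / stdNormalPDF x

open MeasureTheory Real Set Filter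

lemma convF (s : ℝ) (hs : 0 ≤ s) (C : ℝ) (hC : 0 < C) :
    StrictConvexOn ℝ (Set.Ioi 0) (fun x : ℝ => C / Real.sqrt (x^2 + s*x)) := by
  have hp : ∀ x : ℝ, 0 < x → 0 < x^2 + s*x := fun x hx => by nlinarith
  set F : ℝ → ℝ := fun x => C / Real.sqrt (x^2 + s*x) with hFdef
  set F1 : ℝ → ℝ := fun x => -C*(2*x+s) / (2 * (x^2+s*x) * Real.sqrt (x^2+s*x)) with hF1def
  set F2 : ℝ → ℝ := fun x => C*(8*x^2+8*s*x+3*s^2) / (4 * (x^2+s*x)^2 * Real.sqrt (x^2+s*x)) with hF2def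
  have hsq : ∀ x : ℝ, 0 < x → HasDerivAt (fun y : ℝ => Real.sqrt (y^2+s*y)) ((2*x+s)/(2*Real.sqrt (x^2+s*x))) x := by
    intro x hx
    have h1 : HasDerivAt (fun y : ℝ => y^2+s*y) (2*x+s) x := by
      simpa using ((hasDerivAt_pow 2 x).fun_add ((hasDerivAt_id x).const_mul s))
    have := (Real.hasDerivAt_sqrt (hp x hx).ne').comp x h1
    convert this using 1 <;> try rfl
    ring
  have hF : ∀ x ∈ Set.Ioi (0:ℝ), HasDerivAt F (F1 x) x := by
    intro x hx
    have hpx := hp x hx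
    have hrpos : 0 < Real.sqrt (x^2+s*x) := Real.sqrt_pos.2 hpx
    have h := (hasDerivAt_const x C).fun_div (hsq x hx) hrpos.ne'
    set r := Real.sqrt (x^2+s*x) with hrdef
    have hr : r^2 = x^2+s*x := Real.sq_sqrt hpx.le
    convert h using 1 <;> try rfl
    rw [hF1def]
    show -C*(2*x+s) / (2 * (x^2+s*x) * Real.sqrt (x^2+s*x)) = _
    rw [← hrdef, ← hr]
    field_simp
    ring_nf
  have hF1d : ∀ x ∈ Set.Ioi (0:ℝ), HasDerivAt F1 (F2 x) x := by
    intro x hx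
    have hpx := hp x hx
    have hrpos : 0 < Real.sqrt (x^2+s*x) := Real.sqrt_pos.2 hpx
    have hn : HasDerivAt (fun y : ℝ => -C*(2*y+s)) (-C*2) x := by
      simpa using (((hasDerivAt_id x).const_mul 2).add_const s).const_mul (-C)
    have h1 : HasDerivAt (fun y : ℝ => y^2+s*y) (2*x+s) x := by
      simpa using ((hasDerivAt_pow 2 x).fun_add ((hasDerivAt_id x).const_mul s))
    have hd : HasDerivAt (fun y : ℝ => 2 * (y^2+s*y) * Real.sqrt (y^2+s*y))
        (2*(2*x+s) * Real.sqrt (x^2+s*x) + 2*(x^2+s*x) * ((2*x+s)/(2*Real.sqrt (x^2+s*x)))) x := by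
      simpa [mul_comm, mul_assoc] using (h1.const_mul 2).fun_mul (hsq x hx)
    have hdne : 2 * (x^2+s*x) * Real.sqrt (x^2+s*x) ≠ 0 := by positivity
    have h := hn.fun_div hd hdne
    set r := Real.sqrt (x^2+s*x) with hrdef
    have hr : r^2 = x^2+s*x := Real.sq_sqrt hpx.le
    have hrne : r ≠ 0 := by positivity
    convert h using 1 <;> try rfl
    rw [hF2def]
    show C*(8*x^2+8*s*x+3*s^2) / (4 * (x^2+s*x)^2 * Real.sqrt (x^2+s*x)) = _
    have hnum : 8*x^2+8*s*x+3*s^2 = 3*(2*x+s)^2 - 4*(x^2+s*x) := by ring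
    rw [hnum, ← hrdef, ← hr]
    field_simp
    ring
  have hcont : ContinuousOn F (Set.Ioi 0) := by
    apply ContinuousOn.div continuousOn_const
    · exact (Real.continuous_sqrt.comp (by continuity)).continuousOn
    · intro x hx; exact (Real.sqrt_pos.2 (hp x hx)).ne'
  apply strictConvexOn_of_deriv2_pos (convex_Ioi 0) hcont
  intro x hx
  rw [interior_Ioi] at hx
  have h2 : deriv^[2] F x = F2 x := by
    have hev : deriv F =ᶠ[nhds x] F1 := by
      filter_upwards [Ioi_mem_nhds hx] with y hy using (hF y hy).deriv
    show deriv (deriv F) x = F2 x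
    rw [Filter.EventuallyEq.deriv_eq hev]
    exact (hF1d x hx).deriv
  rw [h2, hF2def]
  have hpx := hp x hx
  have hrpos : 0 < Real.sqrt (x^2+s*x) := Real.sqrt_pos.2 hpx
  have hx' : (0:ℝ) < x := hx
  apply div_pos
  · nlinarith
  · positivity

lemma concV (s : ℝ) (hs : 0 < s) (C : ℝ) (hC : 0 < C) :
    StrictConcaveOn ℝ (Set.Ioi 0) (fun x : ℝ => C * x / Real.sqrt (1 + s*x)) := by
  have hp : ∀ x : ℝ, 0 < x → 0 < 1 + s*x := fun x hx => by nlinarith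
  set V : ℝ → ℝ := fun x => C * x / Real.sqrt (1 + s*x) with hVdef
  set V1 : ℝ → ℝ := fun x => C*(2+s*x) / (2 * (1+s*x) * Real.sqrt (1+s*x)) with hV1def
  set V2 : ℝ → ℝ := fun x => -C*s*(4+s*x) / (4 * (1+s*x)^2 * Real.sqrt (1+s*x)) with hV2def
  have hsq : ∀ x : ℝ, 0 < x → HasDerivAt (fun y : ℝ => Real.sqrt (1+s*y)) (s/(2*Real.sqrt (1+s*x))) x := by
    intro x hx
    have h1 : HasDerivAt (fun y : ℝ => 1+s*y) s x := by
      simpa using ((hasDerivAt_id x).const_mul s).const_add 1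
    have := (Real.hasDerivAt_sqrt (hp x hx).ne').comp x h1
    convert this using 1 <;> try rfl
    ring
  have hV : ∀ x ∈ Set.Ioi (0:ℝ), HasDerivAt V (V1 x) x := by
    intro x hx
    have hpx := hp x hx
    have hrpos : 0 < Real.sqrt (1+s*x) := Real.sqrt_pos.2 hpx
    have hn : HasDerivAt (fun y : ℝ => C * y) C x := by
      simpa using (hasDerivAt_id x).const_mul C
    have h := hn.fun_div (hsq x hx) hrpos.ne'
    set r := Real.sqrt (1+s*x) with hrdef
    have hr : r^2 = 1+s*x := Real.sq_sqrt hpx.le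
    convert h using 1 <;> try rfl
    rw [hV1def]
    show C*(2+s*x) / (2 * (1+s*x) * Real.sqrt (1+s*x)) = _
    have hnum : C*(2+s*x) = C*(2*(1+s*x) - s*x) := by ring
    rw [hnum, ← hrdef, ← hr]
    field_simp
    try exact Or.inl trivial
  have hV1d : ∀ x ∈ Set.Ioi (0:ℝ), HasDerivAt V1 (V2 x) x := by
    intro x hx
    have hpx := hp x hx
    have hrpos : 0 < Real.sqrt (1+s*x) := Real.sqrt_pos.2 hpx
    have hn : HasDerivAt (fun y : ℝ => C*(2+s*y)) (C*s) x := by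
      simpa using (((hasDerivAt_id x).const_mul s).const_add 2).const_mul C
    have h1 : HasDerivAt (fun y : ℝ => 1+s*y) s x := by
      simpa using ((hasDerivAt_id x).const_mul s).const_add 1
    have hd : HasDerivAt (fun y : ℝ => 2 * (1+s*y) * Real.sqrt (1+s*y))
        (2*s * Real.sqrt (1+s*x) + 2*(1+s*x) * (s/(2*Real.sqrt (1+s*x)))) x := by
      simpa [mul_comm, mul_assoc] using (h1.const_mul 2).fun_mul (hsq x hx)
    have hdne : 2 * (1+s*x) * Real.sqrt (1+s*x) ≠ 0 := by positivity
    have h := hn.fun_div hd hdne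
    set r := Real.sqrt (1+s*x) with hrdef
    have hr : r^2 = 1+s*x := Real.sq_sqrt hpx.le
    have hrne : r ≠ 0 := by positivity
    convert h using 1 <;> try rfl
    rw [hV2def]
    show -C*s*(4+s*x) / (4 * (1+s*x)^2 * Real.sqrt (1+s*x)) = _
    have hnum : -C*s*(4+s*x) = C*s*(2*(1+s*x) - 3*(2+s*x)) := by ring
    rw [hnum, ← hrdef, ← hr]
    field_simp
    ring_nf
    try exact Or.inl trivial
  have hcont : ContinuousOn V (Set.Ioi 0) := by
    apply ContinuousOn.div (continuous_const.mul continuous_id).continuousOn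
    · exact (Real.continuous_sqrt.comp (by continuity)).continuousOn
    · intro x hx; exact (Real.sqrt_pos.2 (hp x hx)).ne'
  apply strictConcaveOn_of_deriv2_neg (convex_Ioi 0) hcont
  intro x hx
  rw [interior_Ioi] at hx
  have h2 : deriv^[2] V x = V2 x := by
    have hev : deriv V =ᶠ[nhds x] V1 := by
      filter_upwards [Ioi_mem_nhds hx] with y hy using (hV y hy).deriv
    show deriv (deriv V) x = V2 x
    rw [Filter.EventuallyEq.deriv_eq hev]
    exact (hV1d x hx).deriv
  rw [h2, hV2def]
  have hpx := hp x hx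
  have hrpos : 0 < Real.sqrt (1+s*x) := Real.sqrt_pos.2 hpx
  have hx' : (0:ℝ) < x := hx
  apply div_neg_of_neg_of_pos
  · nlinarith [mul_pos hC hs, mul_pos (mul_pos (mul_pos hC hs) hs) hx']
  · positivity

lemma reprG (x : ℝ) (hx : 0 < x) :
    millsRatio (Real.sqrt x) / Real.sqrt x
      = ∫ s in Set.Ioi (0:ℝ), Real.exp (-s/2) / (2 * Real.sqrt x * Real.sqrt (x + s)) := by
  have himg : (fun s : ℝ => Real.sqrt (x + s)) '' (Set.Ioi 0) = Set.Ioi (Real.sqrt x) := by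
    ext t
    constructor
    · rintro ⟨s, hs, rfl⟩
      exact Real.sqrt_lt_sqrt hx.le (by linarith [Set.mem_Ioi.mp hs])
    · intro ht
      have ht' : 0 < t := lt_of_le_of_lt (Real.sqrt_nonneg x) ht
      refine ⟨t^2 - x, ?_, ?_⟩
      · have : x < t^2 := (Real.sqrt_lt' ht').mp ht
        simpa using this
      · show Real.sqrt (x + (t^2 - x)) = t
        rw [show x + (t^2 - x) = t^2 by ring, Real.sqrt_sq ht'.le]
  have hderiv : ∀ s ∈ Set.Ioi (0:ℝ),
      HasDerivWithinAt (fun s : ℝ => Real.sqrt (x + s)) (1/(2*Real.sqrt (x + s))) (Set.Ioi 0) s := by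
    intro s hs
    have hs' : (0:ℝ) < s := hs
    have h1 : HasDerivAt (fun s : ℝ => x + s) 1 s := (hasDerivAt_id s).const_add x
    have := (Real.hasDerivAt_sqrt (by positivity : x + s ≠ 0)).comp s h1
    simpa [mul_comm, Function.comp_def] using this.hasDerivWithinAt
  have hinj : Set.InjOn (fun s : ℝ => Real.sqrt (x + s)) (Set.Ioi 0) := by
    intro a ha b hb h
    have ha' : (0:ℝ) < a := ha
    have hb' : (0:ℝ) < b := hb
    have := (Real.sqrt_inj (by linarith) (by linarith)).mp h
    linarith
  have hsub := MeasureTheory.integral_image_eq_integral_abs_deriv_smul measurableSet_Ioi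
      hderiv hinj stdNormalPDF
  rw [himg] at hsub
  unfold millsRatio
  rw [hsub, div_div, ← MeasureTheory.integral_div]
  apply MeasureTheory.setIntegral_congr_fun measurableSet_Ioi
  intro s hs
  have hs' : (0:ℝ) < s := hs
  have hxs : 0 < x + s := by linarith
  have h1 : 0 < Real.sqrt (x + s) := Real.sqrt_pos.2 hxs
  have h2 : 0 < Real.sqrt x := Real.sqrt_pos.2 hx
  have hpi : 0 < Real.sqrt (2 * Real.pi) := Real.sqrt_pos.2 (by positivity)
  simp only [stdNormalPDF, smul_eq_mul]
  rw [Real.sq_sqrt hxs.le, Real.sq_sqrt hx.le, abs_of_pos (by positivity)]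
  have hexp : Real.exp (-(x+s)/2) = Real.exp (-x/2) * Real.exp (-s/2) := by
    rw [← Real.exp_add]; ring_nf
  rw [hexp]
  have he := Real.exp_ne_zero (-x/2)
  field_simp

lemma reprG' (x : ℝ) (hx : 0 < x) :
    millsRatio (Real.sqrt (1/x)) / Real.sqrt (1/x)
      = ∫ s in Set.Ioi (0:ℝ), Real.exp (-s/2) * x / (2 * Real.sqrt (1 + s*x)) := by
  rw [reprG (1/x) (by positivity)]
  apply MeasureTheory.setIntegral_congr_fun measurableSet_Ioi
  intro s hs
  have hs' : (0:ℝ) < s := hs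
  have h1 : Real.sqrt (1/x) = 1/Real.sqrt x := by
    rw [one_div, one_div, Real.sqrt_inv]
  have h2 : (1:ℝ)/x + s = (1+s*x)/x := by field_simp
  have h3 : Real.sqrt ((1+s*x)/x) = Real.sqrt (1+s*x)/Real.sqrt x :=
    Real.sqrt_div (by positivity) x
  have hsx : 0 < Real.sqrt x := Real.sqrt_pos.2 hx
  have hsw : 0 < Real.sqrt (1+s*x) := Real.sqrt_pos.2 (by positivity)
  have hq : Real.sqrt x ^ 2 = x := Real.sq_sqrt hx.le
  show Real.exp (-s/2) / (2 * Real.sqrt (1/x) * Real.sqrt (1/x + s)) = _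
  rw [h1, h2, h3]
  rw [← hq]
  field_simp
  rw [Real.sqrt_sq hsx.le]

lemma intK (x : ℝ) (hx : 0 < x) :
    MeasureTheory.IntegrableOn
      (fun s => Real.exp (-s/2) / (2 * Real.sqrt x * Real.sqrt (x + s))) (Set.Ioi 0) := by
  have hbound : MeasureTheory.IntegrableOn
      (fun s : ℝ => Real.exp (-(1/2) * s) * (1/(2*x))) (Set.Ioi 0) :=
    (exp_neg_integrableOn_Ioi 0 (by norm_num)).mul_const _
  apply MeasureTheory.Integrable.mono' hbound
  · apply Measurable.aestronglyMeasurable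
    fun_prop
  · filter_upwards [MeasureTheory.ae_restrict_mem measurableSet_Ioi] with s hs
    have hs' : (0:ℝ) < s := hs
    have h1 : 0 < Real.sqrt x := Real.sqrt_pos.2 hx
    have h2 : 0 < Real.sqrt (x+s) := Real.sqrt_pos.2 (by linarith)
    rw [Real.norm_eq_abs, abs_of_nonneg (by positivity)]
    rw [show Real.exp (-(1/2)*s) * (1/(2*x)) = Real.exp (-s/2) / (2*x) by
      rw [show -(1/2)*s = -s/2 by ring]; ring]
    have hden : 2*x ≤ 2 * Real.sqrt x * Real.sqrt (x+s) := by
      have h3 : Real.sqrt x ≤ Real.sqrt (x+s) := Real.sqrt_le_sqrt (by linarith)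
      nlinarith [Real.mul_self_sqrt hx.le]
    gcongr
  
lemma intL (x : ℝ) (hx : 0 < x) :
    MeasureTheory.IntegrableOn
      (fun s => Real.exp (-s/2) * x / (2 * Real.sqrt (1 + s*x))) (Set.Ioi 0) := by
  have hbound : MeasureTheory.IntegrableOn
      (fun s : ℝ => Real.exp (-(1/2) * s) * (x/2)) (Set.Ioi 0) :=
    (exp_neg_integrableOn_Ioi 0 (by norm_num)).mul_const _
  apply MeasureTheory.Integrable.mono' hbound
  · apply Measurable.aestronglyMeasurable
    fun_prop
  · filter_upwards [MeasureTheory.ae_restrict_mem measurableSet_Ioi] with s hs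
    have hs' : (0:ℝ) < s := hs
    have h2 : 1 ≤ Real.sqrt (1+s*x) := by
      nlinarith [Real.sq_sqrt (show (0:ℝ) ≤ 1+s*x by positivity), Real.sqrt_nonneg (1+s*x)]
    rw [Real.norm_eq_abs, abs_of_nonneg (by positivity)]
    rw [show Real.exp (-(1/2)*s) * (x/2) = Real.exp (-s/2) * x / 2 by
      rw [show -(1/2)*s = -s/2 by ring]; ring]
    gcongr
    linarith

lemma integral_lt_integral_Ioi {f g : ℝ → ℝ}
    (hf : MeasureTheory.IntegrableOn f (Set.Ioi 0))
    (hg : MeasureTheory.IntegrableOn g (Set.Ioi 0))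
    (h : ∀ s ∈ Set.Ioi (0:ℝ), f s < g s) :
    (∫ s in Set.Ioi (0:ℝ), f s) < ∫ s in Set.Ioi (0:ℝ), g s := by
  have hlt : 0 < ∫ s in Set.Ioi (0:ℝ), (g s - f s) := by
    rw [MeasureTheory.setIntegral_pos_iff_support_of_nonneg_ae]
    · have hsub : Set.Ioi (0:ℝ) ⊆ Function.support (fun s => g s - f s) := by
        intro s hs
        exact sub_ne_zero.2 (h s hs).ne'
      have : (0:ENNReal) < MeasureTheory.volume (Set.Ioi (0:ℝ)) := by
        rw [Real.volume_Ioi]; exact ENNReal.zero_lt_top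
      calc (0:ENNReal) < MeasureTheory.volume (Set.Ioi (0:ℝ)) := this
        _ = MeasureTheory.volume (Function.support (fun s => g s - f s) ∩ Set.Ioi 0) := by
            rw [Set.inter_eq_right.2 hsub]
        _ = _ := rfl
    · filter_upwards [MeasureTheory.ae_restrict_mem measurableSet_Ioi] with s hs
      exact sub_nonneg.2 (h s hs).le
    · exact hg.sub hf
  have heq := MeasureTheory.integral_sub hg hf
  rw [heq] at hlt
  linarith

/-- The function `g(x) = m(√x)/√x`, where `m` is the Mills ratio of the standard normal law,
is strictly reciprocally concave on `(0,∞)`: `g` is strictly convex on `(0,∞)` and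
`x ↦ g(1/x)` is strictly concave on `(0,∞)`. -/
theorem millsRatio_sqrt_div_sqrt_strictly_reciprocally_concave :
    StrictConvexOn ℝ (Set.Ioi 0) (fun x : ℝ => millsRatio (Real.sqrt x) / Real.sqrt x) ∧
      StrictConcaveOn ℝ (Set.Ioi 0)
        (fun x : ℝ => millsRatio (Real.sqrt (1 / x)) / Real.sqrt (1 / x)) := by
  constructor
  · refine ⟨convex_Ioi 0, ?_⟩
    intro x hx y hy hxy a b ha hb hab
    have hx' : (0:ℝ) < x := hx
    have hy' : (0:ℝ) < y := hy
    have hz' : (0:ℝ) < a * x + b * y := by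
      have := (convex_Ioi (0:ℝ)) hx hy ha.le hb.le hab
      simpa using this
    simp only [smul_eq_mul]
    rw [reprG x hx', reprG y hy', reprG _ hz']
    rw [← MeasureTheory.integral_const_mul, ← MeasureTheory.integral_const_mul,
      ← MeasureTheory.integral_add ((intK x hx').const_mul a) ((intK y hy').const_mul b)]
    apply integral_lt_integral_Ioi (intK _ hz')
      (((intK x hx').const_mul a).add ((intK y hy').const_mul b))
    intro s hs
    simp only [Pi.add_apply]
    have hs' : (0:ℝ) < s := hs
    have hc := (convF s hs'.le (Real.exp (-s/2)/2) (by positivity)).2 hx hy hxy ha hb hab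
    simp only [smul_eq_mul] at hc
    have hKF : ∀ u : ℝ, 0 < u →
        Real.exp (-s/2) / (2 * Real.sqrt u * Real.sqrt (u + s))
          = (Real.exp (-s/2)/2) / Real.sqrt (u^2 + s*u) := by
      intro u hu
      rw [show u^2 + s*u = u*(u+s) by ring, Real.sqrt_mul hu.le]
      ring
    rw [hKF x hx', hKF y hy', hKF _ hz']
    exact hc
  · refine ⟨convex_Ioi 0, ?_⟩
    intro x hx y hy hxy a b ha hb hab
    have hx' : (0:ℝ) < x := hx
    have hy' : (0:ℝ) < y := hy
    have hz' : (0:ℝ) < a * x + b * y := by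
      have := (convex_Ioi (0:ℝ)) hx hy ha.le hb.le hab
      simpa using this
    simp only [smul_eq_mul]
    rw [reprG' x hx', reprG' y hy', reprG' _ hz']
    rw [← MeasureTheory.integral_const_mul, ← MeasureTheory.integral_const_mul,
      ← MeasureTheory.integral_add ((intL x hx').const_mul a) ((intL y hy').const_mul b)]
    apply integral_lt_integral_Ioi
      (((intL x hx').const_mul a).add ((intL y hy').const_mul b)) (intL _ hz')
    intro s hs
    simp only [Pi.add_apply]
    have hs' : (0:ℝ) < s := hs
    have hc := (concV s hs' (Real.exp (-s/2)/2) (by positivity)).2 hx hy hxy ha hb hab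
    simp only [smul_eq_mul] at hc
    have hLV : ∀ u : ℝ,
        (Real.exp (-s/2)/2) * u / Real.sqrt (1 + s*u)
          = Real.exp (-s/2) * u / (2 * Real.sqrt (1 + s*u)) := by
      intro u; ring
    rw [← hLV x, ← hLV y, ← hLV _]
    exact hc
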